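/- Let T be a metric tree with leaves 0,...,n and w_T(σ) := d_{0,σ}(T) for σ ⊆ {1,...,n} nonempty. Extend w_T to monomials in the variables {z_σ} by w_T(z_{σ_1}⋯z_{σ_k}) = Σ w_T(σ_i). Then for the tropical 3-term Plücker relation in variables z_{ij} := z_{{i,j}} (for the Grassmannian Gr_2): among w_T(z_{ij}z_{kℓ}), w_T(z_{ik}z_{jℓ}), w_T(z_{iℓ}z_{jk}) the maximum is attained at least twice, for all distinct i,j,k,ℓ ∈ {1,...,n}. -/

import Mathlib

open SimpleGraph Finset

structure MetricTree (n : ℕ) where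
  V : Type
  [fintypeV : Fintype V]
  [decEqV : DecidableEq V]
  G : SimpleGraph V
  isTree : G.IsTree
  leaf : Fin (n + 1) → V
  leaf_inj : Function.Injective leaf
  len : Sym2 V → ℝ
  len_nonneg : ∀ e, 0 ≤ len e

attribute [instance] MetricTree.fintypeV MetricTree.decEqV

namespace MetricTree

variable {n : ℕ}

/-- The unique path between two vertices of the tree. -/
noncomputable def path (T : MetricTree n) (v w : T.V) : T.G.Walk v w :=
  (T.isTree.existsUnique_path v w).choose

open scoped Classical in
/-- The edges of the convex hull (minimal subtree) of a set of vertices. -/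
noncomputable def hullEdges (T : MetricTree n) (S : Set T.V) : Finset (Sym2 T.V) :=
  Finset.univ.filter fun e => ∃ a ∈ S, ∃ b ∈ S, e ∈ (T.path a b).edges

/-- Total length of the convex hull of a set of vertices. -/
noncomputable def steiner (T : MetricTree n) (S : Set T.V) : ℝ :=
  ∑ e ∈ T.hullEdges S, T.len e

/-- Path distance between two vertices. -/
noncomputable def dist (T : MetricTree n) (a b : T.V) : ℝ := T.steiner {a, b}

/-- Rooted Steiner tree length `d_{0,σ}` for a set `σ ⊆ {1,…,n}` of leaf labels. -/
noncomputable def d0 (T : MetricTree n) (σ : Set (Fin n)) : ℝ :=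
  T.steiner (insert (T.leaf 0) ((fun i => T.leaf i.succ) '' σ))

end MetricTree


section TreeLemmas

variable {V : Type} {G : SimpleGraph V}


variable {V : Type} {G : SimpleGraph V}

/-- `a` and `b` are separated by removing the edge `e`. -/
def ESep (G : SimpleGraph V) (e : Sym2 V) (a b : V) : Prop :=
  ¬ (G.deleteEdges {e}).Reachable a b

lemma reach_of_avoid {a b : V} (w : G.Walk a b) {e : Sym2 V} (h : e ∉ w.edges) :
    (G.deleteEdges {e}).Reachable a b :=
  ⟨w.toDeleteEdges _ (fun e' he' => by rintro (rfl : e' = e); exact h he')⟩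

lemma sep_symm {e : Sym2 V} {a b : V} (h : ESep G e a b) : ESep G e b a :=
  fun hr => h hr.symm

lemma not_sep_self {e : Sym2 V} {a : V} : ¬ ESep G e a a := fun h => h (Reachable.refl a)

lemma sep_nn {e : Sym2 V} {r a b : V} (ha : ¬ ESep G e r a) (hb : ¬ ESep G e r b) :
    ¬ ESep G e a b := by
  simp only [ESep, not_not] at *
  exact ha.symm.trans hb

lemma sep_mixed {e : Sym2 V} {r a b : V} (ha : ESep G e r a) (hb : ¬ ESep G e r b) :
    ESep G e a b := by
  intro hab
  simp only [ESep, not_not] at hb hab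
  exact ha (hb.trans hab.symm)

lemma sep_shift {e : Sym2 V} {a c d : V} (h : ESep G e a c) (hcd : ¬ ESep G e c d) :
    ESep G e a d := by
  intro had
  simp only [ESep, not_not] at hcd had
  exact h (had.trans hcd.symm)

lemma walk_split {a b : V} (w : G.Walk a b) {e : Sym2 V} (he : e ∈ w.edges) :
    ∃ (c d : V) (_ : G.Adj c d) (w1 : G.Walk a c) (w2 : G.Walk d b),
      e = s(c, d) ∧ w.edges = w1.edges ++ e :: w2.edges := by
  induction w with
  | nil => simp at he
  | @cons u v b h q ih =>
    rw [Walk.edges_cons, List.mem_cons] at he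
    rcases he with rfl | he
    · exact ⟨u, v, h, Walk.nil, q, rfl, by simp⟩
    · obtain ⟨c, d, hcd, w1, w2, rfl, heq⟩ := ih he
      exact ⟨c, d, hcd, Walk.cons h w1, w2, rfl, by simp [heq]⟩

lemma tree_bridge (hT : G.IsTree) {c d : V} (h : G.Adj c d) :
    ¬ (G.deleteEdges {s(c, d)}).Reachable c d :=
  isBridge_iff.mp ((isAcyclic_iff_forall_adj_isBridge.mp hT.IsAcyclic) h)

lemma mem_edges_iff_sep (hT : G.IsTree) {a b : V} {e : Sym2 V} {p : G.Walk a b}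
    (hp : p.IsPath) : e ∈ p.edges ↔ ESep G e a b := by
  constructor
  · intro he hr
    obtain ⟨c, d, hcd, w1, w2, rfl, heq⟩ := walk_split p he
    have hnd := hp.edges_nodup
    rw [heq] at hnd
    obtain ⟨h1, h2, hdisj⟩ := List.nodup_append'.mp hnd
    have hw1 : s(c, d) ∉ w1.edges := fun hh => hdisj hh (List.mem_cons_self)
    have hw2 : s(c, d) ∉ w2.edges := (List.nodup_cons.mp h2).1
    exact tree_bridge hT hcd
      (((reach_of_avoid w1 hw1).symm.trans hr).trans (reach_of_avoid w2 hw2).symm)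
  · intro hs
    by_contra he
    exact hs (reach_of_avoid p he)

lemma not_sep_of_not_mem (hT : G.IsTree) {e : Sym2 V} (he : e ∉ G.edgeSet) (a b : V) :
    ¬ ESep G e a b := by
  intro hs
  obtain ⟨p⟩ := hT.isConnected.preconnected a b
  exact hs (reach_of_avoid p fun hmem => he (p.edges_subset_edgeSet hmem))

lemma reach_side (hT : G.IsTree) {u v : V} (h : G.Adj u v) (x : V) :
    ¬ ESep G s(u, v) x u ∨ ¬ ESep G s(u, v) x v := by
  obtain ⟨p, hp, -⟩ := hT.existsUnique_path x u
  by_cases he : s(u, v) ∈ p.edges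
  · obtain ⟨c, d, hcd, w1, w2, heq, hedges⟩ := walk_split p he
    have hnd := hp.edges_nodup
    rw [hedges] at hnd
    obtain ⟨h1, h2, hdisj⟩ := List.nodup_append'.mp hnd
    have hw1 : s(u, v) ∉ w1.edges := fun hh => hdisj hh (List.mem_cons_self)
    rcases Sym2.eq_iff.mp heq.symm with ⟨rfl, rfl⟩ | ⟨rfl, rfl⟩
    · exact Or.inl (fun hs => hs (reach_of_avoid w1 hw1))
    · exact Or.inr (fun hs => hs (reach_of_avoid w1 hw1))
  · exact Or.inl (fun hs => hs (reach_of_avoid p he))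

lemma not_sep_symm {e : Sym2 V} {a b : V} (h : ¬ ESep G e a b) : ¬ ESep G e b a :=
  fun hs => h (sep_symm hs)

lemma sep_pp (hT : G.IsTree) {u v : V} (h : G.Adj u v) {r a b : V}
    (ha : ESep G s(u, v) r a) (hb : ESep G s(u, v) r b) : ¬ ESep G s(u, v) a b := by
  rcases reach_side hT h a with hau | hav <;> rcases reach_side hT h b with hbu | hbv
  · exact sep_nn (not_sep_symm hau) (not_sep_symm hbu)
  · rcases reach_side hT h r with hru | hrv
    · exact absurd (sep_nn (not_sep_symm hru) (not_sep_symm hau)) (not_not_intro ha)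
    · exact absurd (sep_nn (not_sep_symm hrv) (not_sep_symm hbv)) (not_not_intro hb)
  · rcases reach_side hT h r with hru | hrv
    · exact absurd (sep_nn (not_sep_symm hru) (not_sep_symm hbu)) (not_not_intro hb)
    · exact absurd (sep_nn (not_sep_symm hrv) (not_sep_symm hav)) (not_not_intro ha)
  · exact sep_nn (not_sep_symm hav) (not_sep_symm hbv)

lemma core (hT : G.IsTree) {a b c d c₁ d₁ c₂ d₂ : V}
    (h₁ : G.Adj c₁ d₁) (h₂ : G.Adj c₂ d₂)
    (S1 : ¬ ESep G s(c₁,d₁) a b ∧ ¬ ESep G s(c₁,d₁) c d ∧ ESep G s(c₁,d₁) a c)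
    (S2 : ¬ ESep G s(c₂,d₂) a c ∧ ¬ ESep G s(c₂,d₂) b d ∧ ESep G s(c₂,d₂) a b)
    (w1 : G.Walk a c₁) (x1 : G.Walk d₁ c₂) (x2 : G.Walk d₂ d)
    (hw1e : s(c₁,d₁) ∉ w1.edges) (hw1e' : s(c₂,d₂) ∉ w1.edges)
    (hx1e : s(c₁,d₁) ∉ x1.edges) (hx1e' : s(c₂,d₂) ∉ x1.edges)
    (hx2e : s(c₁,d₁) ∉ x2.edges) (hx2e' : s(c₂,d₂) ∉ x2.edges) : False := by
  have hne : s(c₁,d₁) ≠ s(c₂,d₂) := fun h => S2.1 (h ▸ S1.2.2)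
  have Rac1 : (G.deleteEdges {s(c₁,d₁)}).Reachable a c₁ := reach_of_avoid w1 hw1e
  have Rd1c2 : (G.deleteEdges {s(c₁,d₁)}).Reachable d₁ c₂ := reach_of_avoid x1 hx1e
  have Rd2d : (G.deleteEdges {s(c₁,d₁)}).Reachable d₂ d := reach_of_avoid x2 hx2e
  have Rab : (G.deleteEdges {s(c₁,d₁)}).Reachable a b := not_not.mp S1.1
  have Rcd : (G.deleteEdges {s(c₁,d₁)}).Reachable c d := not_not.mp S1.2.1
  have nRac : ¬ (G.deleteEdges {s(c₁,d₁)}).Reachable a c := S1.2.2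
  have brE : ¬ (G.deleteEdges {s(c₁,d₁)}).Reachable c₁ d₁ := tree_bridge hT h₁
  have R'ac1 : (G.deleteEdges {s(c₂,d₂)}).Reachable a c₁ := reach_of_avoid w1 hw1e'
  have R'c1d1 : (G.deleteEdges {s(c₂,d₂)}).Reachable c₁ d₁ :=
    reach_of_avoid (Walk.cons h₁ Walk.nil) (by simp only [Walk.edges_cons, Walk.edges_nil, List.mem_singleton]; exact hne.symm)
  have R'd1c2 : (G.deleteEdges {s(c₂,d₂)}).Reachable d₁ c₂ := reach_of_avoid x1 hx1e'
  have R'd2d : (G.deleteEdges {s(c₂,d₂)}).Reachable d₂ d := reach_of_avoid x2 hx2e'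
  have R'ac : (G.deleteEdges {s(c₂,d₂)}).Reachable a c := not_not.mp S2.1
  have R'bd : (G.deleteEdges {s(c₂,d₂)}).Reachable b d := not_not.mp S2.2.1
  have nR'ab : ¬ (G.deleteEdges {s(c₂,d₂)}).Reachable a b := S2.2.2
  have brE' : ¬ (G.deleteEdges {s(c₂,d₂)}).Reachable c₂ d₂ := tree_bridge hT h₂
  have sep_bc : ESep G s(c₁,d₁) b c := fun hr => nRac (Rab.trans hr)
  have sep'_bc : ESep G s(c₂,d₂) b c := fun hr => nR'ab (R'ac.trans hr.symm)
  obtain ⟨q, hq, -⟩ := hT.existsUnique_path b c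
  have heq : s(c₁,d₁) ∈ q.edges := (mem_edges_iff_sep hT hq).mpr sep_bc
  have he'q : s(c₂,d₂) ∈ q.edges := (mem_edges_iff_sep hT hq).mpr sep'_bc
  obtain ⟨u, v, huv, y1, y2, huve, hqe⟩ := walk_split q heq
  have hnd := hq.edges_nodup
  rw [hqe] at hnd
  obtain ⟨nd1, nd2, disj⟩ := List.nodup_append'.mp hnd
  have hy1e : s(c₁,d₁) ∉ y1.edges := fun hh => disj hh (List.mem_cons_self)
  have hy2e : s(c₁,d₁) ∉ y2.edges := (List.nodup_cons.mp nd2).1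
  have Rbc1 : (G.deleteEdges {s(c₁,d₁)}).Reachable b c₁ := Rab.symm.trans Rac1
  rcases Sym2.eq_iff.mp huve with ⟨hu, hv⟩ | ⟨hu, hv⟩
  swap
  · subst hu; subst hv
    exact brE (Rbc1.symm.trans (reach_of_avoid y1 hy1e))
  subst hu; subst hv
  -- y1 : b → c₁, y2 : d₁ → c
  have he'y : s(c₂,d₂) ∈ y1.edges ∨ s(c₂,d₂) ∈ y2.edges := by
    rw [hqe] at he'q
    rcases List.mem_append.mp he'q with h | h
    · exact Or.inl h
    · rcases List.mem_cons.mp h with h | h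
      · exact absurd h.symm hne
      · exact Or.inr h
  rcases he'y with he'y | he'y
  · -- e' in y1 : b → c₁
    obtain ⟨u', v', h', z1, z2, h'e, hy1es⟩ := walk_split y1 he'y
    have hnd1 : y1.edges.Nodup := nd1
    rw [hy1es] at hnd1
    obtain ⟨k1, k2, disjk⟩ := List.nodup_append'.mp hnd1
    have hz2e' : s(c₂,d₂) ∉ z2.edges := (List.nodup_cons.mp k2).1
    have hz2e : s(c₁,d₁) ∉ z2.edges := fun hh => hy1e
      (by rw [hy1es]; exact List.mem_append_right _ (List.mem_cons_of_mem _ hh))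
    have R'v'c1 : (G.deleteEdges {s(c₂,d₂)}).Reachable v' c₁ := reach_of_avoid z2 hz2e'
    have R'c1c2 : (G.deleteEdges {s(c₂,d₂)}).Reachable c₁ c₂ := R'c1d1.trans R'd1c2
    rcases Sym2.eq_iff.mp h'e with ⟨hu, hv⟩ | ⟨hu, hv⟩
    · subst hu; subst hv
      exact brE' ((R'v'c1.trans R'c1c2).symm)
    · subst hu; subst hv
      -- z2 : c₂ → c₁ avoiding e
      exact brE (Rd1c2.trans (reach_of_avoid z2 hz2e)).symm
  · -- e' in y2 : d₁ → c
    obtain ⟨u', v', h', z1, z2, h'e, hy2es⟩ := walk_split y2 he'y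
    have hnd2 : y2.edges.Nodup := (List.nodup_cons.mp nd2).2
    rw [hy2es] at hnd2
    obtain ⟨m1, m2, disjm⟩ := List.nodup_append'.mp hnd2
    have hz1e' : s(c₂,d₂) ∉ z1.edges := fun hh => disjm hh (List.mem_cons_self)
    have hz2e' : s(c₂,d₂) ∉ z2.edges := (List.nodup_cons.mp m2).1
    have R'd1u' : (G.deleteEdges {s(c₂,d₂)}).Reachable d₁ u' := reach_of_avoid z1 hz1e'
    rcases Sym2.eq_iff.mp h'e with ⟨hu, hv⟩ | ⟨hu, hv⟩
    swap
    · subst hu; subst hv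
      exact brE' ((R'd1u'.symm.trans R'd1c2).symm)
    subst hu; subst hv
    -- z2 : d₂ → c avoiding e'
    have R'd2c : (G.deleteEdges {s(c₂,d₂)}).Reachable d₂ c := reach_of_avoid z2 hz2e'
    exact nR'ab (((R'ac.trans R'd2c.symm).trans R'd2d).trans R'bd.symm)

lemma no_conflict (hT : G.IsTree) {a b c d : V} {e e' : Sym2 V}
    (S1 : ¬ ESep G e a b ∧ ¬ ESep G e c d ∧ ESep G e a c)
    (S2 : ¬ ESep G e' a c ∧ ¬ ESep G e' b d ∧ ESep G e' a b) : False := by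
  have hne : e ≠ e' := fun h => S2.1 (h ▸ S1.2.2)
  have sep_ad : ESep G e a d := sep_shift S1.2.2 S1.2.1
  have sep'_ad : ESep G e' a d := sep_shift S2.2.2 S2.2.1
  obtain ⟨p, hp, -⟩ := hT.existsUnique_path a d
  have hep : e ∈ p.edges := (mem_edges_iff_sep hT hp).mpr sep_ad
  have he'p : e' ∈ p.edges := (mem_edges_iff_sep hT hp).mpr sep'_ad
  obtain ⟨c₁, d₁, h₁, w1, w2, rfl, hpe⟩ := walk_split p hep
  have hnd := hp.edges_nodup
  rw [hpe] at hnd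
  obtain ⟨nd1, nd2, disj⟩ := List.nodup_append'.mp hnd
  have hw1e : s(c₁,d₁) ∉ w1.edges := fun hh => disj hh (List.mem_cons_self)
  have hw2e : s(c₁,d₁) ∉ w2.edges := (List.nodup_cons.mp nd2).1
  have he'w : e' ∈ w1.edges ∨ e' ∈ w2.edges := by
    rw [hpe] at he'p
    rcases List.mem_append.mp he'p with h | h
    · exact Or.inl h
    · rcases List.mem_cons.mp h with h | h
      · exact absurd h.symm hne
      · exact Or.inr h
  rcases he'w with he' | he'
  · obtain ⟨c₂, d₂, h₂, v1, v2, rfl, hwe⟩ := walk_split w1 he'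
    have hnd1 : w1.edges.Nodup := nd1
    rw [hwe] at hnd1
    obtain ⟨m1, m2, disj2⟩ := List.nodup_append'.mp hnd1
    have hv1e' : s(c₂,d₂) ∉ v1.edges := fun hh => disj2 hh (List.mem_cons_self)
    have hv2e' : s(c₂,d₂) ∉ v2.edges := (List.nodup_cons.mp m2).1
    have hv1e : s(c₁,d₁) ∉ v1.edges := fun hh => hw1e (by rw [hwe]; exact List.mem_append_left _ hh)
    have hv2e : s(c₁,d₁) ∉ v2.edges := fun hh => hw1e
      (by rw [hwe]; exact List.mem_append_right _ (List.mem_cons_of_mem _ hh))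
    have hw2e' : s(c₂,d₂) ∉ w2.edges := fun hh => disj he' (List.mem_cons_of_mem _ hh)
    exact core hT h₂ h₁ S2 S1 v1 v2 w2 hv1e' hv1e hv2e' hv2e hw2e' hw2e
  · obtain ⟨c₂, d₂, h₂, x1, x2, rfl, hwe⟩ := walk_split w2 he'
    have hnd2 : w2.edges.Nodup := (List.nodup_cons.mp nd2).2
    rw [hwe] at hnd2
    obtain ⟨m1, m2, disj2⟩ := List.nodup_append'.mp hnd2
    have hx1e' : s(c₂,d₂) ∉ x1.edges := fun hh => disj2 hh (List.mem_cons_self)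
    have hx2e' : s(c₂,d₂) ∉ x2.edges := (List.nodup_cons.mp m2).1
    have hx1e : s(c₁,d₁) ∉ x1.edges := fun hh => hw2e (by rw [hwe]; exact List.mem_append_left _ hh)
    have hx2e : s(c₁,d₁) ∉ x2.edges := fun hh => hw2e
      (by rw [hwe]; exact List.mem_append_right _ (List.mem_cons_of_mem _ hh))
    have hw1e' : s(c₂,d₂) ∉ w1.edges := fun hh => disj hh (List.mem_cons_of_mem _ he')
    exact core hT h₁ h₂ S1 S2 w1 x1 x2 hw1e hw1e' hx1e hx1e' hx2e hx2e'

lemma split_swap34 {e : Sym2 V} {a b c d : V}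
    (h : ¬ ESep G e a b ∧ ¬ ESep G e c d ∧ ESep G e a c) :
    ¬ ESep G e a b ∧ ¬ ESep G e d c ∧ ESep G e a d :=
  ⟨h.1, not_sep_symm h.2.1, sep_shift h.2.2 h.2.1⟩

lemma edge_rep {e : Sym2 V} (he : e ∈ G.edgeSet) : ∃ u v, G.Adj u v ∧ e = s(u, v) := by
  induction e using Sym2.ind with
  | _ u v => exact ⟨u, v, he, rfl⟩

section MT
open scoped Classical

namespace MetricTree

variable {n : ℕ}

lemma path_isPath (T : MetricTree n) (a b : T.V) : (T.path a b).IsPath :=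
  (T.isTree.existsUnique_path a b).choose_spec.1

lemma mem_hull_iff (T : MetricTree n) (p q r : T.V) (e : Sym2 T.V) :
    e ∈ T.hullEdges {p, q, r} ↔ ESep T.G e p q ∨ ESep T.G e p r := by
  simp only [hullEdges, Finset.mem_filter, Finset.mem_univ, true_and, Set.mem_insert_iff,
    Set.mem_singleton_iff]
  constructor
  · rintro ⟨a, (rfl | rfl | rfl), b, (rfl | rfl | rfl), hmem⟩ <;>
      rw [mem_edges_iff_sep T.isTree (T.path_isPath _ _)] at hmem <;>
      first
        | exact absurd hmem not_sep_self
        | exact Or.inl hmem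
        | exact Or.inr hmem
        | exact Or.inl (sep_symm hmem)
        | exact Or.inr (sep_symm hmem)
        | (by_contra hc; push_neg at hc; exact (sep_nn hc.1 hc.2) hmem)
        | (by_contra hc; push_neg at hc; exact (sep_nn hc.2 hc.1) hmem)
  · rintro (h | h)
    · exact ⟨p, Or.inl rfl, q, Or.inr (Or.inl rfl),
        (mem_edges_iff_sep T.isTree (T.path_isPath _ _)).mpr h⟩
    · exact ⟨p, Or.inl rfl, r, Or.inr (Or.inr rfl),
        (mem_edges_iff_sep T.isTree (T.path_isPath _ _)).mpr h⟩

lemma steiner3 (T : MetricTree n) (p q r : T.V) :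
    T.steiner {p, q, r} =
      ∑ e ∈ Finset.univ, if ESep T.G e p q ∨ ESep T.G e p r then T.len e else 0 := by
  have h : T.hullEdges {p, q, r} =
      Finset.univ.filter (fun e => ESep T.G e p q ∨ ESep T.G e p r) := by
    ext e
    rw [Finset.mem_filter, T.mem_hull_iff]
    simp
  rw [steiner, h, Finset.sum_filter]

lemma d0_pair (T : MetricTree n) (a b : Fin n) :
    T.d0 {a, b} = T.steiner {T.leaf 0, T.leaf a.succ, T.leaf b.succ} := by
  rw [d0, Set.image_pair]

lemma perEdge (T : MetricTree n) (e : Sym2 T.V) (q0 qa qb qc qd : T.V)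
    (hY : ¬ (¬ ESep T.G e qa qc ∧ ¬ ESep T.G e qb qd ∧ ESep T.G e qa qb))
    (hZ : ¬ (¬ ESep T.G e qa qd ∧ ¬ ESep T.G e qb qc ∧ ESep T.G e qa qb)) :
    ((if ESep T.G e q0 qa ∨ ESep T.G e q0 qc then T.len e else 0) +
       (if ESep T.G e q0 qb ∨ ESep T.G e q0 qd then T.len e else 0) =
     (if ESep T.G e q0 qa ∨ ESep T.G e q0 qd then T.len e else 0) +
       (if ESep T.G e q0 qb ∨ ESep T.G e q0 qc then T.len e else 0)) ∧
    ((if ESep T.G e q0 qa ∨ ESep T.G e q0 qb then T.len e else 0) +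
       (if ESep T.G e q0 qc ∨ ESep T.G e q0 qd then T.len e else 0) ≤
     (if ESep T.G e q0 qa ∨ ESep T.G e q0 qd then T.len e else 0) +
       (if ESep T.G e q0 qb ∨ ESep T.G e q0 qc then T.len e else 0)) := by
  by_cases he : e ∈ T.G.edgeSet
  · obtain ⟨u, v, huv, rfl⟩ := edge_rep he
    by_cases hsa : ESep T.G s(u,v) q0 qa <;>
    by_cases hsb : ESep T.G s(u,v) q0 qb <;>
    by_cases hsc : ESep T.G s(u,v) q0 qc <;>
    by_cases hsd : ESep T.G s(u,v) q0 qd <;>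
    first
      | exact (hY ⟨sep_pp T.isTree huv hsa hsc, sep_nn hsb hsd, sep_mixed hsa hsb⟩).elim
      | exact (hY ⟨sep_nn hsa hsc, sep_pp T.isTree huv hsb hsd,
          sep_symm (sep_mixed hsb hsa)⟩).elim
      | exact (hZ ⟨sep_pp T.isTree huv hsa hsd, sep_nn hsb hsc, sep_mixed hsa hsb⟩).elim
      | exact (hZ ⟨sep_nn hsa hsd, sep_pp T.isTree huv hsb hsc,
          sep_symm (sep_mixed hsb hsa)⟩).elim
      | (constructor <;> simp [hsa, hsb, hsc, hsd] <;> linarith [T.len_nonneg (s(u,v))])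
  · have hs : ∀ a b : T.V, ¬ ESep T.G e a b := fun a b => not_sep_of_not_mem T.isTree he a b
    simp [hs]

end MetricTree

end MT

end TreeLemmas

/-- with w_T(z_{σ₁}⋯z_{σ_k}) = Σ d_{0,σ_i}, the tropicalized three-term
Plücker relation holds: among the three values of w_T on the quadratic monomials the
maximum is attained at least twice. -/
theorem stmt18 {n : ℕ} (T : MetricTree n) (i j k l : Fin n)
    (hij : i ≠ j) (hik : i ≠ k) (hil : i ≠ l) (hjk : j ≠ k) (hjl : j ≠ l) (hkl : k ≠ l) :
    let w : Fin n → Fin n → ℝ := fun a b => T.d0 {a, b}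
    let x := w i j + w k l
    let y := w i k + w j l
    let z := w i l + w j k
    (x = y ∧ z ≤ x) ∨ (x = z ∧ y ≤ x) ∨ (y = z ∧ x ≤ y) := by
  classical
  intro w x y z
  have hxv : x = T.d0 {i, j} + T.d0 {k, l} := rfl
  have hyv : y = T.d0 {i, k} + T.d0 {j, l} := rfl
  have hzv : z = T.d0 {i, l} + T.d0 {j, k} := rfl
  have exx : T.d0 {i, j} + T.d0 {k, l} = ∑ e ∈ (Finset.univ : Finset (Sym2 T.V)),
      ((if ESep T.G e (T.leaf 0) (T.leaf i.succ) ∨ ESep T.G e (T.leaf 0) (T.leaf j.succ) then T.len e else 0) +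
       (if ESep T.G e (T.leaf 0) (T.leaf k.succ) ∨ ESep T.G e (T.leaf 0) (T.leaf l.succ) then T.len e else 0)) := by
    rw [T.d0_pair i j, T.d0_pair k l, T.steiner3, T.steiner3, ← Finset.sum_add_distrib]
  have eyy : T.d0 {i, k} + T.d0 {j, l} = ∑ e ∈ (Finset.univ : Finset (Sym2 T.V)),
      ((if ESep T.G e (T.leaf 0) (T.leaf i.succ) ∨ ESep T.G e (T.leaf 0) (T.leaf k.succ) then T.len e else 0) +
       (if ESep T.G e (T.leaf 0) (T.leaf j.succ) ∨ ESep T.G e (T.leaf 0) (T.leaf l.succ) then T.len e else 0)) := by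
    rw [T.d0_pair i k, T.d0_pair j l, T.steiner3, T.steiner3, ← Finset.sum_add_distrib]
  have ezz : T.d0 {i, l} + T.d0 {j, k} = ∑ e ∈ (Finset.univ : Finset (Sym2 T.V)),
      ((if ESep T.G e (T.leaf 0) (T.leaf i.succ) ∨ ESep T.G e (T.leaf 0) (T.leaf l.succ) then T.len e else 0) +
       (if ESep T.G e (T.leaf 0) (T.leaf j.succ) ∨ ESep T.G e (T.leaf 0) (T.leaf k.succ) then T.len e else 0)) := by
    rw [T.d0_pair i l, T.d0_pair j k, T.steiner3, T.steiner3, ← Finset.sum_add_distrib]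
  by_cases hB : ∃ e : Sym2 T.V, ¬ESep T.G e (T.leaf i.succ) (T.leaf k.succ) ∧ ¬ESep T.G e (T.leaf j.succ) (T.leaf l.succ) ∧ ESep T.G e (T.leaf i.succ) (T.leaf j.succ)
  · by_cases hC : ∃ e : Sym2 T.V, ¬ESep T.G e (T.leaf i.succ) (T.leaf l.succ) ∧ ¬ESep T.G e (T.leaf j.succ) (T.leaf k.succ) ∧ ESep T.G e (T.leaf i.succ) (T.leaf j.succ)
    · exfalso
      obtain ⟨e, SB⟩ := hB
      obtain ⟨e', SC⟩ := hC
      have SC' : ¬ESep T.G e' (T.leaf i.succ) (T.leaf l.succ) ∧ ¬ESep T.G e' (T.leaf k.succ) (T.leaf j.succ) ∧ ESep T.G e' (T.leaf i.succ) (T.leaf k.succ) := by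
        exact ⟨SC.1, not_sep_symm SC.2.1, sep_shift SC.2.2 SC.2.1⟩
      exact no_conflict T.isTree (split_swap34 SB) SC'
    · have hA : ¬ ∃ e : Sym2 T.V, ¬ESep T.G e (T.leaf i.succ) (T.leaf j.succ) ∧ ¬ESep T.G e (T.leaf k.succ) (T.leaf l.succ) ∧ ESep T.G e (T.leaf i.succ) (T.leaf k.succ) := by
        rintro ⟨e₁, SA⟩
        obtain ⟨e₀, SB⟩ := hB
        exact no_conflict T.isTree
          (show ¬ESep T.G e₁ (T.leaf i.succ) (T.leaf j.succ) ∧ ¬ESep T.G e₁ (T.leaf k.succ) (T.leaf l.succ) ∧ ESep T.G e₁ (T.leaf i.succ) (T.leaf k.succ) from SA)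
          (show ¬ESep T.G e₀ (T.leaf i.succ) (T.leaf k.succ) ∧ ¬ESep T.G e₀ (T.leaf j.succ) (T.leaf l.succ) ∧ ESep T.G e₀ (T.leaf i.succ) (T.leaf j.succ) from SB)
      have pe : ∀ e : Sym2 T.V,
          ((if ESep T.G e (T.leaf 0) (T.leaf i.succ) ∨ ESep T.G e (T.leaf 0) (T.leaf j.succ) then T.len e else 0) + (if ESep T.G e (T.leaf 0) (T.leaf k.succ) ∨ ESep T.G e (T.leaf 0) (T.leaf l.succ) then T.len e else 0) =
           (if ESep T.G e (T.leaf 0) (T.leaf i.succ) ∨ ESep T.G e (T.leaf 0) (T.leaf l.succ) then T.len e else 0) + (if ESep T.G e (T.leaf 0) (T.leaf k.succ) ∨ ESep T.G e (T.leaf 0) (T.leaf j.succ) then T.len e else 0)) ∧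
          ((if ESep T.G e (T.leaf 0) (T.leaf i.succ) ∨ ESep T.G e (T.leaf 0) (T.leaf k.succ) then T.len e else 0) + (if ESep T.G e (T.leaf 0) (T.leaf j.succ) ∨ ESep T.G e (T.leaf 0) (T.leaf l.succ) then T.len e else 0) ≤
           (if ESep T.G e (T.leaf 0) (T.leaf i.succ) ∨ ESep T.G e (T.leaf 0) (T.leaf l.succ) then T.len e else 0) + (if ESep T.G e (T.leaf 0) (T.leaf k.succ) ∨ ESep T.G e (T.leaf 0) (T.leaf j.succ) then T.len e else 0)) := fun e =>
        T.perEdge e (T.leaf 0) (T.leaf i.succ) (T.leaf k.succ) (T.leaf j.succ) (T.leaf l.succ)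
          (fun Y' => hA ⟨e, Y'⟩)
          (fun Z' => hC ⟨e, Z'.1, not_sep_symm Z'.2.1, sep_shift Z'.2.2 Z'.2.1⟩)
      refine Or.inr (Or.inl ⟨?_, ?_⟩)
      · rw [hxv, hzv, exx, ezz]
        refine Finset.sum_congr rfl fun e _ => ?_
        refine ((pe e).1).trans ?_
        rw [show (if ESep T.G e (T.leaf 0) (T.leaf k.succ) ∨ ESep T.G e (T.leaf 0) (T.leaf j.succ) then T.len e else 0) = (if ESep T.G e (T.leaf 0) (T.leaf j.succ) ∨ ESep T.G e (T.leaf 0) (T.leaf k.succ) then T.len e else 0) from if_congr or_comm rfl rfl]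
      · rw [hyv, hxv, eyy, exx]
        refine Finset.sum_le_sum fun e _ => ?_
        exact ((pe e).2).trans (le_of_eq ((pe e).1).symm)
  · by_cases hC : ∃ e : Sym2 T.V, ¬ESep T.G e (T.leaf i.succ) (T.leaf l.succ) ∧ ¬ESep T.G e (T.leaf j.succ) (T.leaf k.succ) ∧ ESep T.G e (T.leaf i.succ) (T.leaf j.succ)
    · have hA : ¬ ∃ e : Sym2 T.V, ¬ESep T.G e (T.leaf i.succ) (T.leaf j.succ) ∧ ¬ESep T.G e (T.leaf k.succ) (T.leaf l.succ) ∧ ESep T.G e (T.leaf i.succ) (T.leaf k.succ) := by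
        rintro ⟨e₁, SA⟩
        obtain ⟨e', SC⟩ := hC
        exact no_conflict T.isTree
          ⟨SA.1, not_sep_symm SA.2.1, sep_shift SA.2.2 SA.2.1⟩
          (show ¬ESep T.G e' (T.leaf i.succ) (T.leaf l.succ) ∧ ¬ESep T.G e' (T.leaf j.succ) (T.leaf k.succ) ∧ ESep T.G e' (T.leaf i.succ) (T.leaf j.succ) from SC)
      have pe : ∀ e : Sym2 T.V,
          ((if ESep T.G e (T.leaf 0) (T.leaf i.succ) ∨ ESep T.G e (T.leaf 0) (T.leaf j.succ) then T.len e else 0) + (if ESep T.G e (T.leaf 0) (T.leaf l.succ) ∨ ESep T.G e (T.leaf 0) (T.leaf k.succ) then T.len e else 0) =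
           (if ESep T.G e (T.leaf 0) (T.leaf i.succ) ∨ ESep T.G e (T.leaf 0) (T.leaf k.succ) then T.len e else 0) + (if ESep T.G e (T.leaf 0) (T.leaf l.succ) ∨ ESep T.G e (T.leaf 0) (T.leaf j.succ) then T.len e else 0)) ∧
          ((if ESep T.G e (T.leaf 0) (T.leaf i.succ) ∨ ESep T.G e (T.leaf 0) (T.leaf l.succ) then T.len e else 0) + (if ESep T.G e (T.leaf 0) (T.leaf j.succ) ∨ ESep T.G e (T.leaf 0) (T.leaf k.succ) then T.len e else 0) ≤
           (if ESep T.G e (T.leaf 0) (T.leaf i.succ) ∨ ESep T.G e (T.leaf 0) (T.leaf k.succ) then T.len e else 0) + (if ESep T.G e (T.leaf 0) (T.leaf l.succ) ∨ ESep T.G e (T.leaf 0) (T.leaf j.succ) then T.len e else 0)) := fun e =>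
        T.perEdge e (T.leaf 0) (T.leaf i.succ) (T.leaf l.succ) (T.leaf j.succ) (T.leaf k.succ)
          (fun Y' => hA ⟨e, Y'.1, not_sep_symm Y'.2.1, sep_shift Y'.2.2 Y'.2.1⟩)
          (fun Z' => hB ⟨e, Z'.1, not_sep_symm Z'.2.1, sep_shift Z'.2.2 Z'.2.1⟩)
      refine Or.inl ⟨?_, ?_⟩
      · rw [hxv, hyv, exx, eyy]
        refine Finset.sum_congr rfl fun e _ => ?_
        rw [show (if ESep T.G e (T.leaf 0) (T.leaf k.succ) ∨ ESep T.G e (T.leaf 0) (T.leaf l.succ) then T.len e else 0) = (if ESep T.G e (T.leaf 0) (T.leaf l.succ) ∨ ESep T.G e (T.leaf 0) (T.leaf k.succ) then T.len e else 0) from if_congr or_comm rfl rfl]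
        refine ((pe e).1).trans ?_
        rw [show (if ESep T.G e (T.leaf 0) (T.leaf l.succ) ∨ ESep T.G e (T.leaf 0) (T.leaf j.succ) then T.len e else 0) = (if ESep T.G e (T.leaf 0) (T.leaf j.succ) ∨ ESep T.G e (T.leaf 0) (T.leaf l.succ) then T.len e else 0) from if_congr or_comm rfl rfl]
      · rw [hzv, hxv, ezz, exx]
        refine Finset.sum_le_sum fun e _ => ?_
        refine ((pe e).2).trans (le_of_eq ?_)
        refine (((pe e).1).symm).trans ?_
        rw [show (if ESep T.G e (T.leaf 0) (T.leaf l.succ) ∨ ESep T.G e (T.leaf 0) (T.leaf k.succ) then T.len e else 0) = (if ESep T.G e (T.leaf 0) (T.leaf k.succ) ∨ ESep T.G e (T.leaf 0) (T.leaf l.succ) then T.len e else 0) from if_congr or_comm rfl rfl]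
    · have pe : ∀ e : Sym2 T.V,
          ((if ESep T.G e (T.leaf 0) (T.leaf i.succ) ∨ ESep T.G e (T.leaf 0) (T.leaf k.succ) then T.len e else 0) + (if ESep T.G e (T.leaf 0) (T.leaf j.succ) ∨ ESep T.G e (T.leaf 0) (T.leaf l.succ) then T.len e else 0) =
           (if ESep T.G e (T.leaf 0) (T.leaf i.succ) ∨ ESep T.G e (T.leaf 0) (T.leaf l.succ) then T.len e else 0) + (if ESep T.G e (T.leaf 0) (T.leaf j.succ) ∨ ESep T.G e (T.leaf 0) (T.leaf k.succ) then T.len e else 0)) ∧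
          ((if ESep T.G e (T.leaf 0) (T.leaf i.succ) ∨ ESep T.G e (T.leaf 0) (T.leaf j.succ) then T.len e else 0) + (if ESep T.G e (T.leaf 0) (T.leaf k.succ) ∨ ESep T.G e (T.leaf 0) (T.leaf l.succ) then T.len e else 0) ≤
           (if ESep T.G e (T.leaf 0) (T.leaf i.succ) ∨ ESep T.G e (T.leaf 0) (T.leaf l.succ) then T.len e else 0) + (if ESep T.G e (T.leaf 0) (T.leaf j.succ) ∨ ESep T.G e (T.leaf 0) (T.leaf k.succ) then T.len e else 0)) := fun e =>
        T.perEdge e (T.leaf 0) (T.leaf i.succ) (T.leaf j.succ) (T.leaf k.succ) (T.leaf l.succ)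
          (fun Y' => hB ⟨e, Y'⟩)
          (fun Z' => hC ⟨e, Z'⟩)
      refine Or.inr (Or.inr ⟨?_, ?_⟩)
      · rw [hyv, hzv, eyy, ezz]
        exact Finset.sum_congr rfl fun e _ => (pe e).1
      · rw [hxv, hyv, exx, eyy]
        refine Finset.sum_le_sum fun e _ => ?_
        exact ((pe e).2).trans (le_of_eq ((pe e).1).symm)
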